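/- Let f be C¹ on [0,∞) with f(0)=0 and 0 < f' ≤ M. Let W : [0,1] → ℝ be a C² solution of W''(s) + (2/s)W'(s) = R² f(W(s)) on (0,1) with W'(0) = 0 and W(0) = σ_D > 0, W ≥ σ_D. Then for all s ∈ [0,1]: (R² f(σ_D)/3) s ≤ W'(s) ≤ (M R²/3) s W(s), and consequently σ_D + (R² f(σ_D)/6) s² ≤ W(s) ≤ σ_D e^{M R² s²/6}. -/

import Mathlib

open Set Filter Topology Real

/-- Monotonicity helper on `Icc 0 1` from a pointwise derivative. -/
lemma stmt9_mono_aux {F F' : ℝ → ℝ}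
    (hF : ∀ s ∈ Set.Icc (0:ℝ) 1, HasDerivAt F (F' s) s)
    (h0 : ∀ s ∈ Set.Ioo (0:ℝ) 1, 0 ≤ F' s) : MonotoneOn F (Set.Icc 0 1) := by
  apply monotoneOn_of_deriv_nonneg (convex_Icc 0 1)
  · exact fun s hs ↦ (hF s hs).continuousAt.continuousWithinAt
  · rw [interior_Icc]
    exact fun s hs ↦
      (hF s (Set.Ioo_subset_Icc_self hs)).differentiableAt.differentiableWithinAt
  · rw [interior_Icc]
    intro s hs
    rw [(hF s (Set.Ioo_subset_Icc_self hs)).deriv]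
    exact h0 s hs

/-- Antitonicity helper on `Icc 0 1` from a pointwise derivative. -/
lemma stmt9_anti_aux {F F' : ℝ → ℝ}
    (hF : ∀ s ∈ Set.Icc (0:ℝ) 1, HasDerivAt F (F' s) s)
    (h0 : ∀ s ∈ Set.Ioo (0:ℝ) 1, F' s ≤ 0) : AntitoneOn F (Set.Icc 0 1) := by
  apply antitoneOn_of_deriv_nonpos (convex_Icc 0 1)
  · exact fun s hs ↦ (hF s hs).continuousAt.continuousWithinAt
  · rw [interior_Icc]
    exact fun s hs ↦
      (hF s (Set.Ioo_subset_Icc_self hs)).differentiableAt.differentiableWithinAt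
  · rw [interior_Icc]
    intro s hs
    rw [(hF s (Set.Ioo_subset_Icc_self hs)).deriv]
    exact h0 s hs

/-- two-sided bounds for W' and W when W(0) = σ_D. -/
theorem stmt9
    (f f' : ℝ → ℝ) (M R σD : ℝ) (hM : 0 < M) (hR : 0 < R) (hσD : 0 < σD)
    (hf : ∀ x ∈ Set.Ici (0:ℝ), HasDerivAt f (f' x) x)
    (hf0 : f 0 = 0)
    (hf' : ∀ x ∈ Set.Ici (0:ℝ), 0 < f' x ∧ f' x ≤ M)
    (W W' W'' : ℝ → ℝ)
    (hW : ∀ s ∈ Set.Icc (0:ℝ) 1, HasDerivAt W (W' s) s)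
    (hW' : ∀ s ∈ Set.Icc (0:ℝ) 1, HasDerivAt W' (W'' s) s)
    (hode : ∀ s ∈ Set.Ioo (0:ℝ) 1,
      W'' s + (2 / s) * W' s = R ^ 2 * f (W s))
    (hbc0 : W' 0 = 0) (hW0 : W 0 = σD)
    (hWlb : ∀ s ∈ Set.Icc (0:ℝ) 1, σD ≤ W s) :
    ∀ s ∈ Set.Icc (0:ℝ) 1,
      (R ^ 2 * f σD / 3) * s ≤ W' s ∧
      W' s ≤ M * R ^ 2 / 3 * s * W s ∧
      σD + R ^ 2 * f σD / 6 * s ^ 2 ≤ W s ∧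
      W s ≤ σD * Real.exp (M * R ^ 2 * s ^ 2 / 6) := by
  -- f is strictly monotone on Ici 0
  have hfmono : StrictMonoOn f (Set.Ici (0:ℝ)) := by
    apply strictMonoOn_of_deriv_pos (convex_Ici 0)
    · exact fun x hx ↦ (hf x hx).continuousAt.continuousWithinAt
    · rw [interior_Ici]
      intro x hx
      rw [(hf x (Set.mem_Ici.mpr (le_of_lt hx))).deriv]
      exact (hf' x (Set.mem_Ici.mpr (le_of_lt hx))).1
  have hfσ : 0 < f σD := by
    have := hfmono (Set.self_mem_Ici) (Set.mem_Ici.mpr hσD.le) hσD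
    rwa [hf0] at this
  -- f x ≤ M x on Ici 0
  have hfub : ∀ x : ℝ, 0 ≤ x → f x ≤ M * x := by
    have hmono : MonotoneOn (fun x ↦ M * x - f x) (Set.Ici (0:ℝ)) := by
      apply monotoneOn_of_deriv_nonneg (convex_Ici 0)
      · exact fun x hx ↦
          (((hasDerivAt_id x).const_mul M).sub (hf x hx)).continuousAt.continuousWithinAt
      · rw [interior_Ici]
        exact fun x hx ↦ (((hasDerivAt_id x).const_mul M).sub
          (hf x (Set.mem_Ici.mpr (le_of_lt hx)))).differentiableAt.differentiableWithinAt
      · rw [interior_Ici]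
        intro x hx
        have hd : HasDerivAt (fun x : ℝ ↦ M * x - f x) (M * 1 - f' x) x :=
          ((hasDerivAt_id x).const_mul M).sub (hf x (Set.mem_Ici.mpr (le_of_lt hx)))
        rw [hd.deriv]
        have := (hf' x (Set.mem_Ici.mpr (le_of_lt hx))).2
        linarith
    intro x hx
    have := hmono Set.self_mem_Ici (Set.mem_Ici.mpr hx) hx
    simp only [mul_zero, hf0, sub_zero] at this
    linarith
  -- f σD ≤ f (W s)
  have hflb : ∀ s ∈ Set.Icc (0:ℝ) 1, f σD ≤ f (W s) := fun s hs ↦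
    hfmono.monotoneOn (Set.mem_Ici.mpr hσD.le)
      (Set.mem_Ici.mpr (hσD.le.trans (hWlb s hs))) (hWlb s hs)
  set c : ℝ := R ^ 2 * f σD with hc
  have hcpos : 0 < c := by positivity
  -- derivative of g s = s^2 * W' s
  have hg : ∀ s ∈ Set.Icc (0:ℝ) 1,
      HasDerivAt (fun s ↦ s ^ 2 * W' s) (2 * s * W' s + s ^ 2 * W'' s) s := by
    intro s hs
    have := (hasDerivAt_pow 2 s).mul (hW' s hs)
    refine this.congr_deriv ?_
    ring
  -- key identity on Ioo: 2 s W' + s² W'' = s² R² f(W s)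
  have hkey : ∀ s ∈ Set.Ioo (0:ℝ) 1,
      2 * s * W' s + s ^ 2 * W'' s = s ^ 2 * (R ^ 2 * f (W s)) := by
    intro s hs
    have hode' := hode s hs
    have hs0 : s ≠ 0 := ne_of_gt hs.1
    field_simp at hode'
    linear_combination s * hode'
  -- lower bound for g : c s³/3 ≤ s² W' s
  have hglb : ∀ s ∈ Set.Icc (0:ℝ) 1, c * s ^ 3 / 3 ≤ s ^ 2 * W' s := by
    have hmono : MonotoneOn (fun s ↦ s ^ 2 * W' s - c * s ^ 3 / 3) (Set.Icc 0 1) := by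
      apply stmt9_mono_aux (F' := fun s ↦ 2 * s * W' s + s ^ 2 * W'' s - c * s ^ 2)
      · intro s hs
        exact (hg s hs).sub (((hasDerivAt_pow 3 s).const_mul c).div_const 3 |>.congr_deriv
          (by ring))
      · intro s hs
        rw [hkey s hs]
        have := hflb s (Set.Ioo_subset_Icc_self hs)
        have hs2 : (0:ℝ) ≤ s ^ 2 := sq_nonneg s
        have hR2 : (0:ℝ) < R ^ 2 := by positivity
        rw [hc]
        nlinarith [mul_nonneg (mul_nonneg (sq_nonneg R) hs2) (sub_nonneg.mpr this)]
    intro s hs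
    have h0 : (0:ℝ) ∈ Set.Icc (0:ℝ) 1 := by constructor <;> norm_num
    have := hmono h0 hs hs.1
    simp [hbc0] at this
    linarith
  -- lower bound for W'
  have hW'lb : ∀ s ∈ Set.Icc (0:ℝ) 1, c / 3 * s ≤ W' s := by
    intro s hs
    rcases eq_or_lt_of_le hs.1 with h | h
    · rw [← h, hbc0]; simp
    · have hglb' := hglb s hs
      have hs2 : (0:ℝ) < s ^ 2 := by positivity
      rw [← mul_le_mul_iff_of_pos_right hs2]
      calc c / 3 * s * s ^ 2 = c * s ^ 3 / 3 := by ring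
        _ ≤ s ^ 2 * W' s := hglb'
        _ = W' s * s ^ 2 := by ring
  have hW'nonneg : ∀ s ∈ Set.Icc (0:ℝ) 1, 0 ≤ W' s := by
    intro s hs
    have := hW'lb s hs
    nlinarith [hs.1]
  -- upper bound for g : s² W' s ≤ (M R²/3) s³ W s
  have hgub : ∀ s ∈ Set.Icc (0:ℝ) 1,
      s ^ 2 * W' s ≤ M * R ^ 2 / 3 * (s ^ 3 * W s) := by
    have hmono : MonotoneOn (fun s ↦ M * R ^ 2 / 3 * (s ^ 3 * W s) - s ^ 2 * W' s)
        (Set.Icc 0 1) := by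
      apply stmt9_mono_aux (F' := fun s ↦
        M * R ^ 2 / 3 * (3 * s ^ 2 * W s + s ^ 3 * W' s) - (2 * s * W' s + s ^ 2 * W'' s))
      · intro s hs
        exact ((((hasDerivAt_pow 3 s).mul (hW s hs)).const_mul (M * R ^ 2 / 3)).congr_deriv
          (by ring)).sub (hg s hs)
      · intro s hs
        rw [hkey s hs]
        have h1 : f (W s) ≤ M * W s :=
          hfub _ (hσD.le.trans (hWlb s (Set.Ioo_subset_Icc_self hs)))
        have h2 : 0 ≤ W' s := hW'nonneg s (Set.Ioo_subset_Icc_self hs)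
        have hs0 : 0 < s := hs.1
        have hR2 : (0:ℝ) < R ^ 2 := by positivity
        nlinarith [mul_nonneg (mul_nonneg hR2.le (sq_nonneg s)) (sub_nonneg.mpr h1),
          mul_nonneg (mul_nonneg (mul_nonneg hM.le hR2.le)
            (pow_nonneg hs0.le 3)) h2]
    intro s hs
    have h0 : (0:ℝ) ∈ Set.Icc (0:ℝ) 1 := by constructor <;> norm_num
    have := hmono h0 hs hs.1
    simp [hbc0] at this
    linarith
  -- upper bound for W'
  have hW'ub : ∀ s ∈ Set.Icc (0:ℝ) 1, W' s ≤ M * R ^ 2 / 3 * s * W s := by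
    intro s hs
    rcases eq_or_lt_of_le hs.1 with h | h
    · rw [← h, hbc0]; simp
    · have := hgub s hs
      have hs2 : (0:ℝ) < s ^ 2 := by positivity
      rw [← mul_le_mul_iff_of_pos_right hs2]
      calc W' s * s ^ 2 = s ^ 2 * W' s := by ring
        _ ≤ M * R ^ 2 / 3 * (s ^ 3 * W s) := this
        _ = M * R ^ 2 / 3 * s * W s * s ^ 2 := by ring
  -- lower bound for W
  have hWlb2 : ∀ s ∈ Set.Icc (0:ℝ) 1, σD + c / 6 * s ^ 2 ≤ W s := by
    have hmono : MonotoneOn (fun s ↦ W s - c / 6 * s ^ 2) (Set.Icc 0 1) := by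
      apply stmt9_mono_aux (F' := fun s ↦ W' s - c / 3 * s)
      · intro s hs
        exact (hW s hs).sub (((hasDerivAt_pow 2 s).const_mul (c / 6)).congr_deriv (by ring))
      · intro s hs
        have := hW'lb s (Set.Ioo_subset_Icc_self hs)
        linarith
    intro s hs
    have h0 : (0:ℝ) ∈ Set.Icc (0:ℝ) 1 := by constructor <;> norm_num
    have := hmono h0 hs hs.1
    simp [hW0] at this
    linarith
  -- upper bound for W via integrating factor
  have hWub2 : ∀ s ∈ Set.Icc (0:ℝ) 1, W s ≤ σD * Real.exp (M * R ^ 2 * s ^ 2 / 6) := by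
    have hanti : AntitoneOn (fun s ↦ W s * Real.exp (-(M * R ^ 2 * s ^ 2 / 6)))
        (Set.Icc 0 1) := by
      apply stmt9_anti_aux (F' := fun s ↦
        W' s * Real.exp (-(M * R ^ 2 * s ^ 2 / 6)) +
          W s * (Real.exp (-(M * R ^ 2 * s ^ 2 / 6)) * (-(M * R ^ 2 * s / 3))))
      · intro s hs
        have hinner : HasDerivAt (fun s ↦ -(M * R ^ 2 * s ^ 2 / 6))
            (-(M * R ^ 2 * s / 3)) s := by
          have := (((hasDerivAt_pow 2 s).const_mul (M * R ^ 2)).div_const 6).neg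
          refine this.congr_deriv ?_
          ring
        exact (hW s hs).mul hinner.exp
      · intro s hs
        have hub := hW'ub s (Set.Ioo_subset_Icc_self hs)
        have hexp : 0 < Real.exp (-(M * R ^ 2 * s ^ 2 / 6)) := Real.exp_pos _
        nlinarith
    intro s hs
    have h0 : (0:ℝ) ∈ Set.Icc (0:ℝ) 1 := by constructor <;> norm_num
    have := hanti h0 hs hs.1
    simp [hW0] at this
    have hexp : 0 < Real.exp (-(M * R ^ 2 * s ^ 2 / 6)) := Real.exp_pos _
    have key : W s * Real.exp (-(M * R ^ 2 * s ^ 2 / 6)) ≤ σD := this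
    have := mul_le_mul_of_nonneg_right key (Real.exp_pos (M * R ^ 2 * s ^ 2 / 6)).le
    rwa [mul_assoc, ← Real.exp_add, neg_add_cancel, Real.exp_zero, mul_one] at this
  intro s hs
  refine ⟨?_, hW'ub s hs, hWlb2 s hs, hWub2 s hs⟩
  have := hW'lb s hs
  calc R ^ 2 * f σD / 3 * s = c / 3 * s := by rw [hc]
    _ ≤ W' s := this
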